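/- For every g ≥ 1, the tuple ((2, 2g+2), 0, 1; (2g+1, 2g+2), (2g+1, 2g+2)) is an SE data set of genus g and exponent 2⁄(2g+2). That is, with n = g+1, a = 1, k₁ = k₂ = 2g+1, n₁ = n₂ = 2g+2: gcd(1, g+1) = 1, gcd(2g+1, 2g+2) = 1, 2·1 ≡ 2 (mod g+1), 2·1 + 1·(2g+1) + 1·(2g+1) ≡ 0 (mod 2g+2), and g = (g+1)(−1) + 2·((g+1)/(2g+2))(2g+1). -/

import Mathlib

/-- For every g ≥ 1, the tuple ((2, 2g+2), 0, 1; (2g+1, 2g+2), (2g+1, 2g+2)) is an SE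
data set of genus g and exponent 2⁄(2g+2). -/
theorem se_data_set_exponent_two (g : ℕ) (hg : 1 ≤ g) :
    2 ≤ g + 1 ∧ 1 < 2 * g + 2 ∧ (2 * g + 2) ∣ (2 * g + 2) ∧
    Nat.gcd 1 (g + 1) = 1 ∧ Nat.gcd (2 * g + 1) (2 * g + 2) = 1 ∧
    2 * 1 ≡ 2 [MOD g + 1] ∧
    2 * 1 + ((2 * g + 2) / (2 * g + 2)) * (2 * g + 1) +
      ((2 * g + 2) / (2 * g + 2)) * (2 * g + 1) ≡ 0 [MOD 2 * g + 2] ∧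
    (g : ℚ) = ((g + 1 : ℕ) : ℚ) * (-1) +
      2 * (((g + 1 : ℕ) : ℚ) / ((2 * g + 2 : ℕ) : ℚ)) * ((2 * g + 1 : ℕ) : ℚ) := by
  have hpos : (2 * g + 2) ≠ 0 := by omega
  refine ⟨by omega, by omega, dvd_refl _, Nat.gcd_one_left _, ?_, rfl, ?_, ?_⟩
  · have h : 2 * g + 2 = 2 * g + 1 + 1 := by ring
    rw [h]
    simp
  · rw [Nat.div_self (by omega)]
    have : 2 * 1 + 1 * (2 * g + 1) + 1 * (2 * g + 1) = 2 * (2 * g + 2) := by ring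
    rw [this]
    exact (Nat.modEq_zero_iff_dvd).mpr ⟨2, by ring⟩
  · have h2 : ((2 * g + 2 : ℕ) : ℚ) = 2 * (((g + 1 : ℕ) : ℚ)) := by push_cast; ring
    have hne : ((2 * g + 2 : ℕ) : ℚ) ≠ 0 := by positivity
    field_simp
    push_cast; ring
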